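/- arXiv:2111.01485 — 2 statements merged into one kernel-verified Lean document; each statement's English description precedes it below -/
import Mathlib

section
/- In the non-idempotent intersection type system for the lambda-calculus with explicit substitutions, a judgment Γ ⊢ (λx.t) u : τ is derivable if and only if Γ ⊢ t[x\u] : τ is derivable. -/
inductive Tm : Type
  | var : ℕ → Tm
  | lam : ℕ → Tm → Tm
  | app : Tm → Tm → Tm
  | es  : ℕ → Tm → Tm → Tm
  deriving DecidableEq

/-- Non-idempotent intersection types: `arr M τ` is `M → τ` where the
multiset `M` is represented as a list of types. -/
inductive Ty : Type
  | base : ℕ → Ty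
  | arr : List Ty → Ty → Ty

/-- A typing environment assigns to each variable a multiset of types. -/
abbrev Env := ℕ → List Ty

/-- Pointwise multiset union of environments. -/
def Env.add (Γ Δ : Env) : Env := fun x => Γ x ++ Δ x

/-- Sum of a list of environments. -/
def Env.sum (l : List Env) : Env := l.foldr Env.add (fun _ => [])

/-- The environment `x : [σ]`. -/
def Env.single (x : ℕ) (σ : Ty) : Env := fun y => if y = x then [σ] else []

/-- Remove the entry of `x` (used when discharging `Γ, x:M ⊢ …`). -/
def Env.remove (Γ : Env) (x : ℕ) : Env := fun y => if y = x then [] else Γ y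

/-- The non-idempotent intersection type system for terms with explicit
substitutions.  In `app`/`es`, the typings of the argument are given by a
list `Ds` of pairs (environment, type), whose types form the multiset `M`. -/
inductive Typing : Env → Tm → Ty → Prop
  | var (x : ℕ) (σ : Ty) : Typing (Env.single x σ) (.var x) σ
  | abs {Γ : Env} {t : Tm} {τ : Ty} (x : ℕ) :
      Typing Γ t τ → Typing (Γ.remove x) (.lam x t) (.arr (Γ x) τ)
  | app {Γ : Env} {t u : Tm} {τ : Ty} (Ds : List (Env × Ty)) :
      Typing Γ t (.arr (Ds.map Prod.snd) τ) →
      (∀ p ∈ Ds, Typing p.1 u p.2) →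
      Typing (Γ.add (Env.sum (Ds.map Prod.fst))) (.app t u) τ
  | es {Γ : Env} {t u : Tm} {τ : Ty} (x : ℕ) (Ds : List (Env × Ty)) :
      Typing Γ t τ →
      Γ x = Ds.map Prod.snd →
      (∀ p ∈ Ds, Typing p.1 u p.2) →
      Typing ((Γ.remove x).add (Env.sum (Ds.map Prod.fst))) (.es x t u) τ

theorem typing_redex_iff_es (Γ : Env) (x : ℕ) (t u : Tm) (τ : Ty) :
    Typing Γ (.app (.lam x t) u) τ ↔ Typing Γ (.es x t u) τ := by
  constructor
  · intro h
    cases h with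
    | app Ds hlam hu =>
      generalize hM : List.map Prod.snd Ds = M at hlam
      cases hlam with
      | abs x ht => exact Typing.es x Ds ht hM.symm hu
  · intro h
    cases h with
    | es x Ds ht hx hu =>
      have habs := Typing.abs x ht
      rw [hx] at habs
      exact Typing.app Ds habs hu
end

section
/- In the non-idempotent intersection type system with explicit substitutions, for any term t, Γ ⊢ t : τ is derivable if and only if Γ ⊢ t† : τ is derivable, where t† reverts all explicit substitutions of t into beta-redexes. -/
/-- Reversion `t†`: turn all explicit substitutions back into β-redexes. -/
def revert : Tm → Tm
  | .var x => .var x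
  | .lam x t => .lam x (revert t)
  | .app t u => .app (revert t) (revert u)
  | .es x t u => .app (.lam x (revert t)) (revert u)

lemma lam_inv {Γ : Env} {x : ℕ} {s : Tm} {σ : Ty} (h : Typing Γ (.lam x s) σ) :
    ∃ Δ τ, σ = .arr (Δ x) τ ∧ Γ = Δ.remove x ∧ Typing Δ s τ := by
  cases h with
  | abs _ ht => exact ⟨_, _, rfl, rfl, ht⟩

/-- typing is stable by reverting explicit substitutions. -/
theorem typing_iff_typing_revert (Γ : Env) (t : Tm) (τ : Ty) :
    Typing Γ t τ ↔ Typing Γ (revert t) τ := by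
  constructor
  · intro h
    induction h with
    | var x σ => exact .var x σ
    | abs x _ ih => exact .abs x ih
    | app Ds _ _ iht ihu => exact .app Ds iht ihu
    | es x Ds _ hx _ iht ihu =>
      have habs := Typing.abs x iht
      rw [hx] at habs
      exact .app Ds habs ihu
  · intro h
    induction t generalizing Γ τ with
    | var x => cases h; exact .var _ _
    | lam x t ih =>
      cases h with
      | abs _ ht => exact .abs x (ih _ _ ht)
    | app t u ih1 ih2 =>
      cases h with
      | app Ds ht hu =>
        exact .app Ds (ih1 _ _ ht) (fun p hp => ih2 _ _ (hu p hp))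
    | es x t u ih1 ih2 =>
      cases h with
      | app Ds ht hu =>
        obtain ⟨Δ, τ', heq, rfl, ht'⟩ := lam_inv ht
        injection heq with h1 h2
        subst h2
        exact .es x Ds (ih1 _ _ ht') h1.symm (fun p hp => ih2 _ _ (hu p hp))
end
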